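/- Let Ã, R̃, Q̃ be real n×n matrices with R̃ and Q̃ skew-symmetric, and let H = [[Ã, R̃], [−Q̃, −Ãᵀ]] be the associated 2n×2n Hamiltonian matrix. Suppose there exist complex n×n matrices X₁, X₂ with X₁ invertible, and a Hurwitz complex n×n matrix H₋, such that H · [X₁; X₂] = [X₁; X₂] · H₋ (stacking X₁ over X₂). Then X = X₂ X₁⁻¹ is skew-symmetric (Xᵀ = −X) and solves the algebraic Riccati equation Ãᵀ X + X Ã + X R̃ X + Q̃ = 0. (Theorem 4.) -/

import Mathlib

open Matrix

noncomputable section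

/-- The complexification of a real matrix. -/
def toC {m n : ℕ} (M : Matrix (Fin m) (Fin n) ℝ) : Matrix (Fin m) (Fin n) ℂ :=
  M.map Complex.ofReal

namespace RicAux

open Polynomial

lemma pow_intertwine {n : ℕ} {A B W : Matrix (Fin n) (Fin n) ℂ} (h : A * W = W * B) :
    ∀ k : ℕ, A ^ k * W = W * B ^ k
  | 0 => by simp
  | (k + 1) => by
      rw [pow_succ, pow_succ, mul_assoc, h, ← mul_assoc, pow_intertwine h k, mul_assoc]

lemma aeval_intertwine {n : ℕ} {A B W : Matrix (Fin n) (Fin n) ℂ} (h : A * W = W * B)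
    (p : ℂ[X]) : (aeval A p) * W = W * (aeval B p) := by
  induction p using Polynomial.induction_on' with
  | add p q hp hq => rw [map_add, map_add, add_mul, mul_add, hp, hq]
  | monomial k c =>
      rw [Polynomial.aeval_monomial, Polynomial.aeval_monomial, mul_assoc,
        pow_intertwine h k, ← mul_assoc, Algebra.commutes, mul_assoc]

lemma eval_charpoly_eq {n : ℕ} (M : Matrix (Fin n) (Fin n) ℂ) (μ : ℂ) :
    M.charpoly.eval μ = (Matrix.diagonal (fun _ => μ) - M).det := by
  rw [Matrix.charpoly, ← Polynomial.coe_evalRingHom, RingHom.map_det]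
  congr 1
  ext i j
  by_cases h : i = j <;>
    simp [Matrix.charmatrix_apply, Matrix.diagonal, h, Matrix.sub_apply]

lemma mem_spectrum_iff_eval {n : ℕ} (M : Matrix (Fin n) (Fin n) ℂ) (μ : ℂ) :
    μ ∈ spectrum ℂ M ↔ M.charpoly.eval μ = 0 := by
  have key : (algebraMap ℂ (Matrix (Fin n) (Fin n) ℂ)) μ - M =
      Matrix.diagonal (fun _ => μ) - M := by
    congr 1
  rw [spectrum.mem_iff, Matrix.isUnit_iff_isUnit_det, isUnit_iff_ne_zero, not_ne_iff,
    eval_charpoly_eq, key]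

lemma eval_charpoly_transpose {n : ℕ} (M : Matrix (Fin n) (Fin n) ℂ) (μ : ℂ) :
    (Mᵀ).charpoly.eval μ = M.charpoly.eval μ := by
  rw [eval_charpoly_eq, eval_charpoly_eq, ← Matrix.det_transpose (Matrix.diagonal _ - M)]
  congr 1
  rw [Matrix.transpose_sub, Matrix.diagonal_transpose]

lemma sylvester_zero {n : ℕ} {A B W : Matrix (Fin n) (Fin n) ℂ}
    (h : A * W = W * B)
    (hd : ∀ k ∈ spectrum ℂ B, A.charpoly.eval k ≠ 0) : W = 0 := by
  have h0 : W * aeval B A.charpoly = 0 := by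
    rw [← aeval_intertwine h, Matrix.aeval_self_charpoly, zero_mul]
  have hu : IsUnit (aeval B A.charpoly) := by
    by_contra hnu
    rw [(IsAlgClosed.splits A.charpoly).eq_prod_roots_of_monic
      A.charpoly_monic] at hnu
    obtain ⟨k, hk, hk0⟩ := spectrum.exists_mem_of_not_isUnit_aeval_prod hnu
    exact hd k hk hk0
  have h0' : W * (↑hu.unit : Matrix (Fin n) (Fin n) ℂ) = 0 := by
    rw [hu.unit_spec]; exact h0
  exact (Units.mul_left_eq_zero hu.unit).mp h0'

end RicAux

/-- **Theorem 4.** If `H = [[Ã, R̃], [−Q̃, −Ãᵀ]]` (with `R̃, Q̃` real skew-symmetric) has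
an `n`-dimensional invariant graph subspace `[X₁; X₂]` with `X₁` invertible and
restriction `H₋` Hurwitz, then `X = X₂X₁⁻¹` is skew-symmetric and solves the
algebraic Riccati equation `Ãᵀ X + X Ã + X R̃ X + Q̃ = 0`. -/
theorem ric_skew_symmetric_solves_are
    (n : ℕ) (At Rt Qt : Matrix (Fin n) (Fin n) ℝ)
    (hR : Rtᵀ = -Rt) (hQ : Qtᵀ = -Qt)
    (X₁ X₂ Hminus : Matrix (Fin n) (Fin n) ℂ)
    (hX₁ : IsUnit X₁)
    (hHur : ∀ μ ∈ spectrum ℂ Hminus, μ.re < 0)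
    (hInv : Matrix.fromBlocks (toC At) (toC Rt) (-(toC Qt)) (-(toC At)ᵀ) *
        Matrix.fromRows X₁ X₂ = Matrix.fromRows X₁ X₂ * Hminus) :
    (X₂ * X₁⁻¹)ᵀ = -(X₂ * X₁⁻¹) ∧
    (toC At)ᵀ * (X₂ * X₁⁻¹) + (X₂ * X₁⁻¹) * toC At +
      (X₂ * X₁⁻¹) * toC Rt * (X₂ * X₁⁻¹) + toC Qt = 0 := by
  set A := toC At with hA
  set R := toC Rt with hRdef
  set Q := toC Qt with hQdef
  -- skew-symmetry of complexified matrices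
  have hRC : Rᵀ = -R := by
    ext i j
    have := congrFun (congrFun hR i) j
    simp only [Matrix.transpose_apply, Matrix.neg_apply] at this ⊢
    simp [hRdef, toC, this]
  have hQC : Qᵀ = -Q := by
    ext i j
    have := congrFun (congrFun hQ i) j
    simp only [Matrix.transpose_apply, Matrix.neg_apply] at this ⊢
    simp [hQdef, toC, this]
  -- block equations
  rw [Matrix.fromBlocks_mul_fromRows, Matrix.fromRows_mul] at hInv
  obtain ⟨e1, e2⟩ := (Matrix.fromRows_ext_iff _ _ _ _).mp hInv
  -- e1 : A * X₁ + R * X₂ = X₁ * Hminus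
  -- e2 : -Q * X₁ + (-Aᵀ) * X₂ = X₂ * Hminus
  have hd : IsUnit X₁.det := (Matrix.isUnit_iff_isUnit_det X₁).mp hX₁
  have h1 : X₁ * X₁⁻¹ = 1 := Matrix.mul_nonsing_inv _ hd
  have h2 : X₁⁻¹ * X₁ = 1 := Matrix.nonsing_inv_mul _ hd
  have hYX : (X₂ * X₁⁻¹) * X₁ = X₂ := by rw [mul_assoc, h2, mul_one]
  have hc : ∀ M N : Matrix (Fin n) (Fin n) ℂ, M * X₁ = N * X₁ → M = N := by
    intro M N h
    have := congrArg (· * X₁⁻¹) h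
    simpa [mul_assoc, h1] using this
  constructor
  · -- skew-symmetry of X₂ * X₁⁻¹
    have h1t : X₁ᵀ * Aᵀ + X₂ᵀ * (-R) = Hminusᵀ * X₁ᵀ := by
      rw [← hRC, ← Matrix.transpose_mul, ← Matrix.transpose_mul, ← Matrix.transpose_add, e1,
        Matrix.transpose_mul]
    have h2t : X₁ᵀ * Q + X₂ᵀ * (-A) = Hminusᵀ * X₂ᵀ := by
      have : X₁ᵀ * (-Q)ᵀ + X₂ᵀ * (-Aᵀ)ᵀ = Hminusᵀ * X₂ᵀ := by
        rw [← Matrix.transpose_mul, ← Matrix.transpose_mul, ← Matrix.transpose_add, e2,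
          Matrix.transpose_mul]
      rw [Matrix.transpose_neg, Matrix.transpose_neg, Matrix.transpose_transpose, hQC,
        neg_neg] at this
      exact this
    have sylv : Hminusᵀ * (X₁ᵀ * X₂ + X₂ᵀ * X₁) = (X₁ᵀ * X₂ + X₂ᵀ * X₁) * (-Hminus) := by
      calc Hminusᵀ * (X₁ᵀ * X₂ + X₂ᵀ * X₁)
          = (Hminusᵀ * X₁ᵀ) * X₂ + (Hminusᵀ * X₂ᵀ) * X₁ := by noncomm_ring
        _ = (X₁ᵀ * Aᵀ + X₂ᵀ * (-R)) * X₂ + (X₁ᵀ * Q + X₂ᵀ * (-A)) * X₁ := by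
            rw [h1t, h2t]
        _ = -(X₁ᵀ * ((-Q) * X₁ + (-Aᵀ) * X₂) + X₂ᵀ * (A * X₁ + R * X₂)) := by noncomm_ring
        _ = -(X₁ᵀ * (X₂ * Hminus) + X₂ᵀ * (X₁ * Hminus)) := by rw [e1, e2]
        _ = (X₁ᵀ * X₂ + X₂ᵀ * X₁) * (-Hminus) := by noncomm_ring
    have hW : X₁ᵀ * X₂ + X₂ᵀ * X₁ = 0 := by
      refine RicAux.sylvester_zero sylv ?_
      intro k hk hk0
      -- k ∈ spectrum (-Hminus), so -k ∈ spectrum Hminus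
      have hk' : -k ∈ spectrum ℂ Hminus := by
        rw [← spectrum.neg_eq] at hk
        simpa using hk
      have hkre : 0 < k.re := by
        have := hHur (-k) hk'
        simpa using this
      -- k is a root of charpoly of Hminusᵀ, hence in spectrum of Hminus
      rw [RicAux.eval_charpoly_transpose] at hk0
      have : k ∈ spectrum ℂ Hminus := (RicAux.mem_spectrum_iff_eval _ _).mpr hk0
      have := hHur k this
      linarith
    -- conclude skew-symmetry
    have hX₂t : X₂ᵀ = -(X₁ᵀ * (X₂ * X₁⁻¹)) := by
      apply hc
      rw [neg_mul, mul_assoc, hYX]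
      exact eq_neg_of_add_eq_zero_right hW
    rw [Matrix.transpose_mul, Matrix.transpose_nonsing_inv, hX₂t]
    rw [mul_neg, ← mul_assoc, ← mul_assoc]
    have : X₁ᵀ⁻¹ * X₁ᵀ = 1 := Matrix.nonsing_inv_mul _ (by simpa using hd)
    rw [this, one_mul]
  · -- Riccati equation
    apply hc
    rw [zero_mul]
    calc (Aᵀ * (X₂ * X₁⁻¹) + (X₂ * X₁⁻¹) * A + (X₂ * X₁⁻¹) * R * (X₂ * X₁⁻¹) + Q) * X₁
        = Aᵀ * ((X₂ * X₁⁻¹) * X₁) + (X₂ * X₁⁻¹) * (A * X₁ + R * ((X₂ * X₁⁻¹) * X₁))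
            + Q * X₁ := by noncomm_ring
      _ = Aᵀ * X₂ + (X₂ * X₁⁻¹) * (X₁ * Hminus) + Q * X₁ := by rw [hYX, e1]
      _ = Aᵀ * X₂ + X₂ * Hminus + Q * X₁ := by rw [← mul_assoc, hYX]
      _ = Aᵀ * X₂ + ((-Q) * X₁ + (-Aᵀ) * X₂) + Q * X₁ := by rw [e2]
      _ = 0 := by noncomm_ring
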